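/- Lipschitz continuity of the delayed term along the solution: In the linear delay framework with the additional regularity assumptions below, there is a constant C > 0, independent of the initial data, such that for every (x,f) ∈ 𝒟 the map [0,−σ₀] ∋ s ↦ Φu_s ∈ H, where u_s := 𝒫₂𝒯(s)(x,f), is Lipschitz continuous with constant C(‖x‖_B + ‖f‖_{Lip(H)} + ‖f‖_{W^{1,p}(H)}). -/

import Mathlib

open MeasureTheory Filter Set

noncomputable section

/-- Lebesgue measure on `[-1,0]`. -/
def lam : Measure ℝ := volume.restrict (Set.Icc (-1) 0)

/-- Graph of the generator of a strongly continuous semigroup. -/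
def genGraph {E : Type*} [NormedAddCommGroup E] [NormedSpace ℝ E]
    (T : ℝ → E →L[ℝ] E) : Set (E × E) :=
  {q | Tendsto (fun t : ℝ => t⁻¹ • (T t q.1 - q.1)) (nhdsWithin 0 (Set.Ioi 0)) (nhds q.2)}

/-- A strongly continuous semigroup of bounded linear operators. -/
def IsC0Semigroup {E : Type*} [NormedAddCommGroup E] [NormedSpace ℝ E]
    (T : ℝ → E →L[ℝ] E) : Prop :=
  T 0 = 1 ∧ (∀ s, 0 ≤ s → ∀ t, 0 ≤ t → T (s + t) = (T s).comp (T t)) ∧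
    ∀ x, ContinuousOn (fun t => T t x) (Set.Ici (0:ℝ))

/-- A strongly continuous contraction semigroup. -/
def IsC0Contraction {E : Type*} [NormedAddCommGroup E] [NormedSpace ℝ E]
    (T : ℝ → E →L[ℝ] E) : Prop :=
  IsC0Semigroup T ∧ ∀ t, 0 ≤ t → ∀ x, ‖T t x‖ ≤ ‖x‖

variable {H : Type*} [NormedAddCommGroup H] [InnerProductSpace ℝ H] [CompleteSpace H]

/-- `F` is an absolutely continuous function on `[-1,0]` with derivative `F'` of class
`L^p`; this encodes membership of (the class of) `F` in `W^{1,p}([-1,0];H)`. -/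
def IsW1pRep (p : ℝ) (F F' : ℝ → H) : Prop :=
  MemLp F' (ENNReal.ofReal p) lam ∧
    ∀ σ ∈ Set.Icc (-1:ℝ) 0, F σ = F (-1) + ∫ s in Set.Icc (-1:ℝ) σ, F' s

/-- The state space `ℰ = H × L^p([-1,0];H)` of the delay equation. -/
abbrev DelayE (H : Type*) [NormedAddCommGroup H] (p : ℝ) :=
  H × Lp H (ENNReal.ofReal p) lam

/-- The delay operator `Φ F = ∫ k(σ) F(σ) dμ(σ)` (Riemann–Stieltjes operator in
total-variation-measure form). -/
def Phi (μ : Measure ℝ) (k : ℝ → H →L[ℝ] H) (F : ℝ → H) : H := ∫ σ, k σ (F σ) ∂μ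

/-- The `p`-product norm `‖(x,f)‖_ℰ = (‖x‖^p + ‖f‖_{L^p}^p)^{1/p}` on `ℰ`. -/
def Enorm (p : ℝ) (q : DelayE H p) : ℝ := (‖q.1‖ ^ p + ‖q.2‖ ^ p) ^ (1 / p)

/-- The graph of the delay operator matrix `𝒢(x,f) = (Bx + Φf, f')` with domain
`{(x,f) : x ∈ D(B), f ∈ W^{1,p}([-1,0];H), f(0) = x}`, where `B` is the generator
of the semigroup `V`. -/
def delayGraph (p : ℝ) (V : ℝ → H →L[ℝ] H) (μ : Measure ℝ) (k : ℝ → H →L[ℝ] H) :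
    Set (DelayE H p × DelayE H p) :=
  {q | ∃ F F' : ℝ → H,
    (∀ᵐ σ ∂lam, q.1.2 σ = F σ) ∧ (∀ᵐ σ ∂lam, q.2.2 σ = F' σ) ∧
    IsW1pRep p F F' ∧ F 0 = q.1.1 ∧
    (q.1.1, q.2.1 - Phi μ k F) ∈ genGraph V}

/-- The graph of the operator `𝒜₂(x,f) = (Φf, f')` with domain
`{(x,f) : f ∈ W^{1,p}([-1,0];H), f(0) = x}`. -/
def shiftGraph (p : ℝ) (μ : Measure ℝ) (k : ℝ → H →L[ℝ] H) :
    Set (DelayE H p × DelayE H p) :=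
  {q | ∃ F F' : ℝ → H,
    (∀ᵐ σ ∂lam, q.1.2 σ = F σ) ∧ (∀ᵐ σ ∂lam, q.2.2 σ = F' σ) ∧
    IsW1pRep p F F' ∧ F 0 = q.1.1 ∧ q.2.1 = Phi μ k F}

/-- The pointwise history segment `u_t` of the orbit of `(x,f) = q` under `T`:
`u_t(σ) = u(t+σ)` if `t+σ > 0` and `u_t(σ) = f(t+σ)` otherwise, where
`u(s) = 𝒫₁ T(s) q` and `F` is the chosen representative of `f`. -/
def histFun (p : ℝ) [Fact (1 ≤ ENNReal.ofReal p)]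
    (T : ℝ → DelayE H p →L[ℝ] DelayE H p) (q : DelayE H p) (F : ℝ → H)
    (t σ : ℝ) : H :=
  if 0 < t + σ then (T (t + σ) q).1 else F (t + σ)

/-- The semigroup `T` on `ℰ` satisfies the history (translation) formula. -/
def HistoryFormula (p : ℝ) [Fact (1 ≤ ENNReal.ofReal p)]
    (T : ℝ → DelayE H p →L[ℝ] DelayE H p) : Prop :=
  ∀ q : DelayE H p, ∀ t, 0 ≤ t → ∀ F : ℝ → H, (∀ᵐ σ ∂lam, q.2 σ = F σ) →
    ∀ᵐ σ ∂lam, (T t q).2 σ = histFun p T q F t σ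

/-- The smallest Lipschitz constant of `F` on `[-1,0]`. -/
def lipConst (F : ℝ → H) : ℝ :=
  sInf {L | 0 ≤ L ∧ ∀ σ₁ ∈ Set.Icc (-1:ℝ) 0, ∀ σ₂ ∈ Set.Icc (-1:ℝ) 0,
    ‖F σ₁ - F σ₂‖ ≤ L * |σ₁ - σ₂|}

/-- The Lipschitz norm `‖f‖_{Lip(H)} = sup_σ ‖F(σ)‖ + Lip(F)`. -/
def LipNormH (F : ℝ → H) : ℝ := (⨆ σ : Set.Icc (-1:ℝ) 0, ‖F (σ : ℝ)‖) + lipConst F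

/-- The `L^p([-1,0];H)` norm of a representative. -/
def LpNormOn (p : ℝ) (F : ℝ → H) : ℝ :=
  (∫ σ in Set.Icc (-1:ℝ) 0, ‖F σ‖ ^ p) ^ (1 / p)

/-- The `W^{1,p}([-1,0];H)` norm `‖f‖ = ‖f‖_{L^p} + ‖f'‖_{L^p}`. -/
def W1pNormH (p : ℝ) (F F' : ℝ → H) : ℝ := LpNormOn p F + LpNormOn p F'

/-- The `L^p([-1,0];D(B))` norm of a representative, computed through the graph norm
of `B` (the function `BF` records the pointwise values `B(F(σ))`). -/
def LpNormB (p : ℝ) (F BF : ℝ → H) : ℝ :=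
  (∫ σ in Set.Icc (-1:ℝ) 0, (‖F σ‖ + ‖BF σ‖) ^ p) ^ (1 / p)

/-- The `W^{1,p}([-1,0];D(B))` norm. -/
def W1pNormB (p : ℝ) (F F' BF BF' : ℝ → H) : ℝ := LpNormB p F BF + LpNormB p F' BF'

/-- Membership of `(x,f) = q` in the regularity class
`𝒟 = {(x,f) : x ∈ D(B²), f ∈ W^{1,p}([-1,0];D(B)), f Lipschitz into H, f(0) = x}`,
witnessed by a representative `F` of `f`, a representative `F'` of its derivative,
the pointwise values `BF = B∘F`, `BF' = B∘F'` and the vectors `Bx = Bx`, `B2x = B²x`,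
where `B` is the generator of `V`. -/
def DMem (p : ℝ) (V : ℝ → H →L[ℝ] H) (q : DelayE H p) (F F' BF BF' : ℝ → H)
    (Bx B2x : H) : Prop :=
  (∀ᵐ σ ∂lam, q.2 σ = F σ) ∧
  IsW1pRep p F F' ∧
  F 0 = q.1 ∧
  (q.1, Bx) ∈ genGraph V ∧ (Bx, B2x) ∈ genGraph V ∧
  (∀ σ ∈ Set.Icc (-1:ℝ) 0, (F σ, BF σ) ∈ genGraph V) ∧
  (∀ σ ∈ Set.Icc (-1:ℝ) 0, (F' σ, BF' σ) ∈ genGraph V) ∧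
  (∀ σ ∈ Set.Icc (-1:ℝ) 0, BF σ = BF (-1) + ∫ s in Set.Icc (-1:ℝ) σ, BF' s) ∧
  MemLp BF' (ENNReal.ofReal p) lam ∧
  (∃ L, 0 ≤ L ∧ ∀ σ₁ ∈ Set.Icc (-1:ℝ) 0, ∀ σ₂ ∈ Set.Icc (-1:ℝ) 0,
    ‖F σ₁ - F σ₂‖ ≤ L * |σ₁ - σ₂|)

/-- The norm `‖(x,f)‖_𝒟 = ‖x‖_B + ‖Bx‖_B + ‖f‖_{W^{1,p}(D(B))} + ‖f‖_{Lip(H)}`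
computed from the witnesses. -/
def DNorm (p : ℝ) (q : DelayE H p) (F F' BF BF' : ℝ → H) (Bx B2x : H) : ℝ :=
  (‖q.1‖ + ‖Bx‖) + (‖Bx‖ + ‖B2x‖) + W1pNormB p F F' BF BF' + LipNormH F


lemma sm_apply' {H : Type*} [NormedAddCommGroup H] [NormedSpace ℝ H]
    (k : ℝ → H →L[ℝ] H) (hkmeas : ∀ x : H, StronglyMeasurable fun σ => k σ x)
    {G : ℝ → H} (hG : StronglyMeasurable G) :
    StronglyMeasurable fun σ => k σ (G σ) := by
  have hsimple : ∀ s : SimpleFunc ℝ H, StronglyMeasurable fun σ => k σ (s σ) := by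
    intro s
    induction s using MeasureTheory.SimpleFunc.induction with
    | @const c A hA =>
      have heq : (fun σ => k σ ((SimpleFunc.piecewise A hA (SimpleFunc.const ℝ c)
          (SimpleFunc.const ℝ 0)) σ)) = A.indicator fun σ => k σ c := by
        funext σ
        by_cases h : σ ∈ A <;>
          simp [SimpleFunc.piecewise_apply, Set.indicator, h]
      rw [heq]
      exact (hkmeas c).indicator hA
    | @add f g _ hf hg =>
      have heq : (fun σ => k σ ((f + g) σ))
          = fun σ => k σ (f σ) + k σ (g σ) := by
        funext σ; simp
      rw [heq]
      exact hf.add hg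
  exact stronglyMeasurable_of_tendsto atTop (fun n => hsimple (hG.approx n))
    (tendsto_pi_nhds.2 fun σ => ((k σ).continuous.tendsto _).comp (hG.tendsto_approx σ))

lemma orbit_hasDerivWithinAt {E : Type*} [NormedAddCommGroup E] [NormedSpace ℝ E]
    {T : ℝ → E →L[ℝ] E} (hT : IsC0Semigroup T) {q y : E} (hqy : (q, y) ∈ genGraph T)
    {x : ℝ} (hx : 0 ≤ x) :
    HasDerivWithinAt (fun r => T r q) (T x y) (Set.Ici x) x := by
  rw [hasDerivWithinAt_iff_tendsto_slope]
  have hIoi : Set.Ici x \ {x} = Set.Ioi x := by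
    ext r
    simp only [Set.mem_diff, Set.mem_Ici, Set.mem_singleton_iff, Set.mem_Ioi]
    constructor
    · rintro ⟨h1, h2⟩; exact lt_of_le_of_ne h1 (Ne.symm h2)
    · intro h; exact ⟨h.le, ne_of_gt h⟩
  rw [hIoi]
  have hsub : Tendsto (fun r : ℝ => r - x) (nhdsWithin x (Set.Ioi x))
      (nhdsWithin 0 (Set.Ioi 0)) := by
    apply tendsto_nhdsWithin_of_tendsto_nhds_of_eventually_within
    · have h2 : Tendsto (fun r : ℝ => r - x) (nhds x) (nhds (x - x)) :=
        (continuous_id.sub continuous_const).tendsto x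
      simpa using h2.mono_left nhdsWithin_le_nhds
    · filter_upwards [self_mem_nhdsWithin] with r hr
      simpa [Set.mem_Ioi] using sub_pos.2 (Set.mem_Ioi.1 hr)
  have hy : Tendsto (fun t : ℝ => t⁻¹ • (T t q - q)) (nhdsWithin 0 (Set.Ioi 0)) (nhds y) := hqy
  have hcomp := ((T x).continuous.tendsto y).comp (hy.comp hsub)
  apply hcomp.congr'
  filter_upwards [self_mem_nhdsWithin] with r hr
  have hrx : x < r := hr
  have h1 : T r q = T x (T (r - x) q) := by
    have h2 := hT.2.1 x hx (r - x) (by linarith)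
    rw [show x + (r - x) = r by ring] at h2
    rw [h2]; rfl
  show T x ((r - x)⁻¹ • (T (r - x) q - q)) = slope (fun r => T r q) x r
  rw [slope_def_module, h1, (T x).map_smul, (T x).map_sub]

lemma lipConst_spec' {H : Type*} [NormedAddCommGroup H] [InnerProductSpace ℝ H]
    (F : ℝ → H) {L : ℝ} (hL : 0 ≤ L)
    (h : ∀ σ₁ ∈ Set.Icc (-1:ℝ) 0, ∀ σ₂ ∈ Set.Icc (-1:ℝ) 0, ‖F σ₁ - F σ₂‖ ≤ L * |σ₁ - σ₂|) :
    0 ≤ lipConst F ∧ ∀ σ₁ ∈ Set.Icc (-1:ℝ) 0, ∀ σ₂ ∈ Set.Icc (-1:ℝ) 0,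
      ‖F σ₁ - F σ₂‖ ≤ lipConst F * |σ₁ - σ₂| := by
  unfold lipConst
  have hne : ({L | 0 ≤ L ∧ ∀ σ₁ ∈ Set.Icc (-1:ℝ) 0, ∀ σ₂ ∈ Set.Icc (-1:ℝ) 0,
      ‖F σ₁ - F σ₂‖ ≤ L * |σ₁ - σ₂|}).Nonempty := ⟨L, hL, h⟩
  have h0 : (0:ℝ) ≤ sInf {L | 0 ≤ L ∧ ∀ σ₁ ∈ Set.Icc (-1:ℝ) 0, ∀ σ₂ ∈ Set.Icc (-1:ℝ) 0,
      ‖F σ₁ - F σ₂‖ ≤ L * |σ₁ - σ₂|} := le_csInf hne fun M hM => hM.1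
  refine ⟨h0, ?_⟩
  intro σ₁ h₁ σ₂ h₂
  rcases eq_or_ne σ₁ σ₂ with rfl | hne'
  · simp
  · have hd : 0 < |σ₁ - σ₂| := abs_pos.2 (sub_ne_zero.2 hne')
    rw [← div_le_iff₀ hd]
    apply le_csInf hne
    intro M hM
    rw [div_le_iff₀ hd]
    exact hM.2 σ₁ h₁ σ₂ h₂


set_option maxHeartbeats 2000000 in
/-- Lipschitz continuity of the delayed term `s ↦ Φ u_s` along the solution. -/
theorem delayed_term_lipschitz
    {H : Type*} [NormedAddCommGroup H] [InnerProductSpace ℝ H] [CompleteSpace H]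
    (p : ℝ) (hp : 1 < p) [Fact (1 ≤ ENNReal.ofReal p)]
    (V : ℝ → H →L[ℝ] H) (hV : IsC0Contraction V)
    (hVdense : Dense {x : H | ∃ y, (x, y) ∈ genGraph V})
    (μ : Measure ℝ) [IsFiniteMeasure μ]
    (hμsupp : μ (Set.Icc (-1:ℝ) 0)ᶜ = 0) (hμatom : 0 < μ {(-1:ℝ)})
    (k : ℝ → H →L[ℝ] H)
    (hkmeas : ∀ x : H, MeasureTheory.StronglyMeasurable fun σ => k σ x)
    (hknorm : ∀ σ, ‖k σ‖ ≤ 1)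
    (σ₀ : ℝ) (hσ₀ : σ₀ ∈ Set.Ioo (-1:ℝ) 0) (κ : ℝ) (hκ : 0 < κ)
    (habs : ∀ E : Set ℝ, MeasurableSet E →
      μ (E ∩ Set.Icc σ₀ 0) ≤ ENNReal.ofReal κ * volume (E ∩ Set.Icc σ₀ 0))
    (hkB : ∃ Ck : ℝ, ∀ σ : ℝ, ∀ x y : H, (x, y) ∈ genGraph V →
      ∃ z, (k σ x, z) ∈ genGraph V ∧ ‖k σ x‖ + ‖z‖ ≤ Ck * (‖x‖ + ‖y‖))
    (𝒯 : ℝ → DelayE H p →L[ℝ] DelayE H p)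
    (h𝒯sg : IsC0Semigroup 𝒯)
    (hgen𝒯 : genGraph 𝒯 = delayGraph p V μ k)
    (hhist : HistoryFormula p 𝒯) :
    ∃ C : ℝ, 0 < C ∧
      ∀ (q : DelayE H p) (F F' BF BF' : ℝ → H) (Bx B2x : H),
        DMem p V q F F' BF BF' Bx B2x →
        ∀ s ∈ Set.Icc (0:ℝ) (-σ₀), ∀ t ∈ Set.Icc (0:ℝ) (-σ₀),
          ‖Phi μ k (histFun p 𝒯 q F s) - Phi μ k (histFun p 𝒯 q F t)‖ ≤
            C * ((‖q.1‖ + ‖Bx‖) + LipNormH F + W1pNormH p F F') * |s - t| := by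
  obtain ⟨hT0, hTadd, hTcont⟩ := h𝒯sg
  obtain ⟨M₀, hM₀⟩ : ∃ M₀ : ℝ, ∀ r : Set.Icc (0:ℝ) 1, ‖𝒯 r‖ ≤ M₀ := by
    apply banach_steinhaus
    intro x
    obtain ⟨Cb, hCb⟩ := (isCompact_Icc (a := (0:ℝ)) (b := 1)).exists_bound_of_continuousOn
      ((hTcont x).mono fun r hr => hr.1)
    exact ⟨Cb, fun r => hCb r r.2⟩
  set M : ℝ := max M₀ 1 with hMdef
  have hM1 : (1:ℝ) ≤ M := le_max_right _ _
  have hM0 : (0:ℝ) ≤ M := by linarith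
  have hMr : ∀ r : ℝ, 0 ≤ r → r ≤ 1 → ‖𝒯 r‖ ≤ M := fun r h1 h2 =>
    le_trans (hM₀ ⟨r, h1, h2⟩) (le_max_left _ _)
  set μtot : ℝ := (μ Set.univ).toReal with hμtotdef
  have hμtot0 : (0:ℝ) ≤ μtot := ENNReal.toReal_nonneg
  refine ⟨(M * (1 + μtot) + 1) * μtot + 1, by positivity, ?_⟩
  intro q F F' BF BF' Bx B2x hD
  obtain ⟨hqF, hW, hF0, hBx, -, -, -, -, -, L, hL0, hLipF⟩ := hD
  obtain ⟨hF'mem, hFrep⟩ := hW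
  obtain ⟨hlip0, hlip⟩ := lipConst_spec' F hL0 hLipF
  have haeIcc : ∀ᵐ σ ∂μ, σ ∈ Set.Icc (-1:ℝ) 0 := by
    rw [ae_iff]; exact hμsupp
  -- sup of ‖F‖
  have h0mem : (0:ℝ) ∈ Set.Icc (-1:ℝ) 0 := by constructor <;> norm_num
  have hFbdd : BddAbove (Set.range fun σ : Set.Icc (-1:ℝ) 0 => ‖F (σ:ℝ)‖) := by
    refine ⟨L + ‖F 0‖, ?_⟩
    rintro - ⟨σ, rfl⟩
    have h1 : ‖F (σ:ℝ) - F 0‖ ≤ L * |(σ:ℝ) - 0| := hLipF _ σ.2 0 h0mem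
    have h2 : |(σ:ℝ) - 0| ≤ 1 := by
      rw [sub_zero, abs_le]; exact ⟨by linarith [σ.2.1], by linarith [σ.2.2]⟩
    calc ‖F (σ:ℝ)‖ = ‖(F (σ:ℝ) - F 0) + F 0‖ := by rw [sub_add_cancel]
    _ ≤ ‖F (σ:ℝ) - F 0‖ + ‖F 0‖ := norm_add_le _ _
    _ ≤ L + ‖F 0‖ := by nlinarith
  have hFsup : ∀ σ ∈ Set.Icc (-1:ℝ) 0, ‖F σ‖ ≤ ⨆ σ : Set.Icc (-1:ℝ) 0, ‖F (σ:ℝ)‖ :=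
    fun σ hσ => le_ciSup hFbdd (⟨σ, hσ⟩ : Set.Icc (-1:ℝ) 0)
  have hsupF0 : 0 ≤ ⨆ σ : Set.Icc (-1:ℝ) 0, ‖F (σ:ℝ)‖ :=
    Real.iSup_nonneg fun σ => norm_nonneg _
  have hLN : LipNormH F = (⨆ σ : Set.Icc (-1:ℝ) 0, ‖F (σ:ℝ)‖) + lipConst F := rfl
  have hWN : W1pNormH p F F' = LpNormOn p F + LpNormOn p F' := rfl
  have hLpF0 : 0 ≤ LpNormOn p F :=
    Real.rpow_nonneg (integral_nonneg fun a => Real.rpow_nonneg (norm_nonneg _) _) _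
  have hLpF'0 : 0 ≤ LpNormOn p F' :=
    Real.rpow_nonneg (integral_nonneg fun a => Real.rpow_nonneg (norm_nonneg _) _) _
  set R : ℝ := (‖q.1‖ + ‖Bx‖) + LipNormH F + W1pNormH p F F' with hRdef
  have hR0 : 0 ≤ R := by
    rw [hRdef, hLN, hWN]
    have := norm_nonneg q.1; have := norm_nonneg Bx
    linarith
  -- the generator vector y
  have hp0' : (0:ℝ) < p := lt_trans one_pos hp
  have hpne : (ENNReal.ofReal p) ≠ 0 := by
    simp only [ne_eq, ENNReal.ofReal_eq_zero, not_le]; linarith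
  set y : DelayE H p := (Bx + Phi μ k F, hF'mem.toLp F') with hydef
  have hqy : (q, y) ∈ genGraph 𝒯 := by
    rw [hgen𝒯]
    refine ⟨F, F', hqF, hF'mem.coeFn_toLp, ⟨hF'mem, hFrep⟩, hF0, ?_⟩
    have he : Bx + Phi μ k F - Phi μ k F = Bx := add_sub_cancel_right _ _
    show (q.1, Bx + Phi μ k F - Phi μ k F) ∈ genGraph V
    rw [he]; exact hBx
  -- bound on ‖y‖
  have hPhiF : ‖Phi μ k F‖ ≤ μtot * (⨆ σ : Set.Icc (-1:ℝ) 0, ‖F (σ:ℝ)‖) := by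
    have hb : ‖∫ σ, k σ (F σ) ∂μ‖ ≤ ∫ _σ, (⨆ σ : Set.Icc (-1:ℝ) 0, ‖F (σ:ℝ)‖) ∂μ := by
      apply norm_integral_le_of_norm_le (integrable_const _)
      filter_upwards [haeIcc] with σ hσ
      calc ‖k σ (F σ)‖ ≤ ‖k σ‖ * ‖F σ‖ := (k σ).le_opNorm _
      _ ≤ 1 * ‖F σ‖ := mul_le_mul_of_nonneg_right (hknorm σ) (norm_nonneg _)
      _ = ‖F σ‖ := one_mul _
      _ ≤ _ := hFsup σ hσ
    rw [integral_const, smul_eq_mul] at hb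
    exact hb
  have hy2 : ‖(hF'mem.toLp F' : Lp H (ENNReal.ofReal p) lam)‖ = LpNormOn p F' := by
    rw [Lp.norm_toLp, hF'mem.eLpNorm_eq_integral_rpow_norm hpne ENNReal.ofReal_ne_top,
      ENNReal.toReal_ofReal (Real.rpow_nonneg
        (integral_nonneg fun a => Real.rpow_nonneg (norm_nonneg _) _) _),
      ENNReal.toReal_ofReal hp0'.le]
    unfold LpNormOn
    rw [one_div]
    rfl
  have hyR : ‖y‖ ≤ (1 + μtot) * R := by
    have h1 : ‖y‖ = max ‖y.1‖ ‖y.2‖ := Prod.norm_def y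
    have hsupR : (⨆ σ : Set.Icc (-1:ℝ) 0, ‖F (σ:ℝ)‖) ≤ R := by
      rw [hRdef, hLN, hWN]
      have := norm_nonneg q.1; have := norm_nonneg Bx
      linarith
    have hy1 : ‖y.1‖ ≤ (1 + μtot) * R := by
      have h2 : ‖y.1‖ ≤ ‖Bx‖ + ‖Phi μ k F‖ := norm_add_le _ _
      have h3 : ‖Bx‖ ≤ R := by
        rw [hRdef, hLN, hWN]
        have := norm_nonneg q.1
        linarith
      have h4 := mul_le_mul_of_nonneg_left hsupR hμtot0
      nlinarith [hPhiF]
    have hy2' : ‖y.2‖ ≤ (1 + μtot) * R := by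
      have h2 : ‖y.2‖ = LpNormOn p F' := hy2
      have h3 : LpNormOn p F' ≤ R := by
        rw [hRdef, hLN, hWN]
        have := norm_nonneg q.1; have := norm_nonneg Bx
        linarith
      nlinarith [hμtot0, hR0]
    rw [h1]
    exact max_le hy1 hy2'
  -- Lipschitz estimate for the orbit
  have hTlip : ∀ a b : ℝ, 0 ≤ a → a ≤ b → b ≤ 1 →
      ‖(𝒯 b) q - (𝒯 a) q‖ ≤ M * ‖y‖ * (b - a) := by
    intro a b ha hab hb1
    have hmvt := norm_image_sub_le_of_norm_deriv_right_le_segment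
      (f := fun r => 𝒯 r q) (f' := fun r => 𝒯 r y) (a := a) (b := 1) (C := M * ‖y‖)
      ((hTcont q).mono fun r hr => le_trans ha hr.1)
      (fun r hr => orbit_hasDerivWithinAt ⟨hT0, hTadd, hTcont⟩ hqy (le_trans ha hr.1))
      (fun r hr => le_trans ((𝒯 r).le_opNorm y)
        (mul_le_mul_of_nonneg_right (hMr r (le_trans ha hr.1) hr.2.le) (norm_nonneg y)))
      b ⟨hab, hb1⟩
    exact hmvt
  have hu0 : (𝒯 0 q).1 = q.1 := by rw [hT0]; rfl
  have hulip : ∀ a b : ℝ, 0 ≤ a → a ≤ b → b ≤ 1 →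
      ‖(𝒯 b q).1 - (𝒯 a q).1‖ ≤ M * ‖y‖ * (b - a) := by
    intro a b ha hab hb1
    calc ‖(𝒯 b q).1 - (𝒯 a q).1‖ = ‖((𝒯 b) q - (𝒯 a) q).1‖ := rfl
    _ ≤ ‖(𝒯 b) q - (𝒯 a) q‖ := norm_fst_le _
    _ ≤ M * ‖y‖ * (b - a) := hTlip a b ha hab hb1
  -- continuity ingredients for integrability
  have hFcontOn : ContinuousOn F (Set.Icc (-1:ℝ) 0) := by
    have hlw : LipschitzOnWith (Real.toNNReal L) F (Set.Icc (-1:ℝ) 0) := by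
      apply LipschitzOnWith.of_dist_le_mul
      intro a ha b hb
      rw [Real.coe_toNNReal L hL0]
      calc dist (F a) (F b) = ‖F a - F b‖ := dist_eq_norm _ _
      _ ≤ L * |a - b| := hLipF a ha b hb
      _ = L * dist a b := by rw [Real.dist_eq]
    exact hlw.continuousOn
  set cl : ℝ → ℝ := fun r => max (-1) (min r 0) with hcldef
  have hclcont : Continuous cl := continuous_const.max (continuous_id.min continuous_const)
  have hclmem : ∀ r, cl r ∈ Set.Icc (-1:ℝ) 0 :=
    fun r => ⟨le_max_left _ _, max_le (by norm_num) (min_le_right _ _)⟩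
  have hcl_eq : ∀ r ∈ Set.Icc (-1:ℝ) 0, cl r = r := by
    intro r hr
    rw [hcldef]
    simp only
    rw [min_eq_left hr.2, max_eq_right hr.1]
  set uu : ℝ → H := fun r => (𝒯 (max r 0) q).1 with huudef
  have huu : Continuous uu := by
    have h1 : ContinuousOn (fun r => (𝒯 r q).1) (Set.Ici (0:ℝ)) :=
      continuous_fst.comp_continuousOn (hTcont q)
    have h2 : Continuous fun r : ℝ => max r 0 := continuous_id.max continuous_const
    rw [← continuousOn_univ]
    exact h1.comp h2.continuousOn fun r _ => le_max_right r 0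
  set FF : ℝ → H := fun r => F (cl r) with hFFdef
  have hFF : Continuous FF := by
    rw [← continuousOn_univ]
    exact hFcontOn.comp hclcont.continuousOn fun r _ => hclmem r
  have hFF0 : FF 0 = q.1 := by
    rw [hFFdef]; simp only
    rw [hcl_eq 0 h0mem, hF0]
  have huu0 : uu 0 = q.1 := by
    rw [huudef]; simp only
    rw [max_self]; exact hu0
  set Gc : ℝ → ℝ → H := fun a σ => if a + cl σ ≤ 0 then FF (a + cl σ) else uu (a + cl σ)
    with hGcdef
  have hGc_cont : ∀ a : ℝ, Continuous (Gc a) := by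
    intro a
    apply Continuous.if_le (hFF.comp (continuous_const.add hclcont))
      (huu.comp (continuous_const.add hclcont))
      (continuous_const.add hclcont) continuous_const
    intro σ hσ
    show FF (a + cl σ) = uu (a + cl σ)
    rw [show a + cl σ = 0 from hσ, hFF0, huu0]
  have hGc_eq : ∀ a ∈ Set.Icc (0:ℝ) (-σ₀), ∀ σ ∈ Set.Icc (-1:ℝ) 0,
      histFun p 𝒯 q F a σ = Gc a σ := by
    intro a ha σ hσ
    have h1 : cl σ = σ := hcl_eq σ hσ
    simp only [histFun, hGcdef, h1]
    by_cases hcase : 0 < a + σ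
    · rw [if_pos hcase, if_neg (not_le.2 hcase)]
      show (𝒯 (a + σ) q).1 = (𝒯 (max (a + σ) 0) q).1
      rw [max_eq_left hcase.le]
    · rw [if_neg hcase, if_pos (not_lt.1 hcase)]
      show F (a + σ) = F (cl (a + σ))
      rw [hcl_eq _ ⟨by linarith [ha.1, hσ.1], not_lt.1 hcase⟩]
  have hint : ∀ a ∈ Set.Icc (0:ℝ) (-σ₀),
      Integrable (fun σ => k σ (histFun p 𝒯 q F a σ)) μ := by
    intro a ha
    have hae : (fun σ => k σ (Gc a σ)) =ᵐ[μ] fun σ => k σ (histFun p 𝒯 q F a σ) := by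
      filter_upwards [haeIcc] with σ hσ
      rw [hGc_eq a ha σ hσ]
    obtain ⟨Cb, hCb⟩ := (isCompact_Icc (a := (-1:ℝ)) (b := 0)).exists_bound_of_continuousOn
      (hGc_cont a).continuousOn
    have hGcb : ∀ σ, ‖Gc a σ‖ ≤ Cb := by
      intro σ
      have h1 : Gc a σ = Gc a (cl σ) := by
        simp only [hGcdef]
        rw [hcl_eq (cl σ) (hclmem σ)]
      rw [h1]
      exact hCb _ (hclmem σ)
    have hm : AEStronglyMeasurable (fun σ => k σ (Gc a σ)) μ :=
      (sm_apply' k hkmeas (hGc_cont a).stronglyMeasurable).aestronglyMeasurable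
    have hI : Integrable (fun σ => k σ (Gc a σ)) μ := by
      apply Integrable.mono' (integrable_const Cb) hm
      filter_upwards with σ
      calc ‖k σ (Gc a σ)‖ ≤ ‖k σ‖ * ‖Gc a σ‖ := (k σ).le_opNorm _
      _ ≤ 1 * ‖Gc a σ‖ := mul_le_mul_of_nonneg_right (hknorm σ) (norm_nonneg _)
      _ = ‖Gc a σ‖ := one_mul _
      _ ≤ Cb := hGcb σ
    exact hI.congr hae
  -- the main estimate for ordered pairs
  have main : ∀ a b : ℝ, a ∈ Set.Icc (0:ℝ) (-σ₀) → b ∈ Set.Icc (0:ℝ) (-σ₀) → a ≤ b →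
      ‖Phi μ k (histFun p 𝒯 q F b) - Phi μ k (histFun p 𝒯 q F a)‖ ≤
        ((M * (1 + μtot) + 1) * μtot + 1) * R * (b - a) := by
    intro a b ha hb hab
    have hb1 : b ≤ 1 := le_trans hb.2 (by linarith [hσ₀.1])
    have hMy0 : 0 ≤ M * ‖y‖ := mul_nonneg hM0 (norm_nonneg _)
    have hkey : ∀ σ ∈ Set.Icc (-1:ℝ) 0,
        ‖histFun p 𝒯 q F b σ - histFun p 𝒯 q F a σ‖ ≤
          (M * ‖y‖ + lipConst F) * (b - a) := by
      intro σ hσ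
      simp only [histFun]
      by_cases hca : 0 < a + σ
      · have hcb : 0 < b + σ := by linarith
        rw [if_pos hca, if_pos hcb]
        calc ‖(𝒯 (b + σ) q).1 - (𝒯 (a + σ) q).1‖
            ≤ M * ‖y‖ * ((b + σ) - (a + σ)) :=
              hulip (a + σ) (b + σ) hca.le (by linarith) (by linarith [hσ.2])
        _ = M * ‖y‖ * (b - a) := by ring
        _ ≤ (M * ‖y‖ + lipConst F) * (b - a) := by nlinarith
      · by_cases hcb : 0 < b + σ
        · rw [if_pos hcb, if_neg hca]
          have h1 : ‖(𝒯 (b + σ) q).1 - q.1‖ ≤ M * ‖y‖ * (b + σ) := by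
            have h2 := hulip 0 (b + σ) le_rfl hcb.le (by linarith [hσ.2])
            rw [hu0, sub_zero] at h2
            exact h2
          have h2 : ‖q.1 - F (a + σ)‖ ≤ lipConst F * (-(a + σ)) := by
            rw [← hF0]
            calc ‖F 0 - F (a + σ)‖ ≤ lipConst F * |0 - (a + σ)| :=
              hlip 0 h0mem (a + σ) ⟨by linarith [ha.1, hσ.1], not_lt.1 hca⟩
            _ = lipConst F * (-(a + σ)) := by
              rw [zero_sub, abs_of_nonneg (by linarith [not_lt.1 hca])]
          have e1 : b + σ ≤ b - a := by linarith [not_lt.1 hca]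
          have e2 : -(a + σ) ≤ b - a := by linarith
          calc ‖(𝒯 (b + σ) q).1 - F (a + σ)‖
              = ‖((𝒯 (b + σ) q).1 - q.1) + (q.1 - F (a + σ))‖ := by
                rw [sub_add_sub_cancel]
          _ ≤ ‖(𝒯 (b + σ) q).1 - q.1‖ + ‖q.1 - F (a + σ)‖ := norm_add_le _ _
          _ ≤ M * ‖y‖ * (b + σ) + lipConst F * (-(a + σ)) := add_le_add h1 h2
          _ ≤ (M * ‖y‖ + lipConst F) * (b - a) := by
            nlinarith [mul_le_mul_of_nonneg_left e1 hMy0,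
              mul_le_mul_of_nonneg_left e2 hlip0]
        · rw [if_neg hca, if_neg hcb]
          calc ‖F (b + σ) - F (a + σ)‖
              ≤ lipConst F * |b + σ - (a + σ)| :=
                hlip (b + σ) ⟨by linarith [hb.1, hσ.1], not_lt.1 hcb⟩
                  (a + σ) ⟨by linarith [ha.1, hσ.1], not_lt.1 hca⟩
          _ = lipConst F * (b - a) := by
            rw [show b + σ - (a + σ) = b - a by ring, abs_of_nonneg (by linarith)]
          _ ≤ (M * ‖y‖ + lipConst F) * (b - a) := by nlinarith
    have hIb := hint b hb
    have hIa := hint a ha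
    unfold Phi
    rw [← integral_sub hIb hIa]
    have hbound : ‖∫ σ, (k σ (histFun p 𝒯 q F b σ) - k σ (histFun p 𝒯 q F a σ)) ∂μ‖
        ≤ ∫ _σ, (M * ‖y‖ + lipConst F) * (b - a) ∂μ := by
      apply norm_integral_le_of_norm_le (integrable_const _)
      filter_upwards [haeIcc] with σ hσ
      rw [← (k σ).map_sub]
      calc ‖k σ (histFun p 𝒯 q F b σ - histFun p 𝒯 q F a σ)‖
          ≤ ‖k σ‖ * ‖histFun p 𝒯 q F b σ - histFun p 𝒯 q F a σ‖ := (k σ).le_opNorm _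
      _ ≤ 1 * ‖histFun p 𝒯 q F b σ - histFun p 𝒯 q F a σ‖ :=
          mul_le_mul_of_nonneg_right (hknorm σ) (norm_nonneg _)
      _ = ‖histFun p 𝒯 q F b σ - histFun p 𝒯 q F a σ‖ := one_mul _
      _ ≤ (M * ‖y‖ + lipConst F) * (b - a) := hkey σ hσ
    rw [integral_const, smul_eq_mul] at hbound
    refine le_trans hbound ?_
    have hba : (0:ℝ) ≤ b - a := by linarith
    have hlipR : lipConst F ≤ R := by
      rw [hRdef, hLN, hWN]
      have := norm_nonneg q.1; have := norm_nonneg Bx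
      linarith
    have s1 : M * ‖y‖ + lipConst F ≤ (M * (1 + μtot) + 1) * R := by
      nlinarith [mul_le_mul_of_nonneg_left hyR hM0]
    have s2 : μtot * (M * ‖y‖ + lipConst F) ≤ μtot * ((M * (1 + μtot) + 1) * R) :=
      mul_le_mul_of_nonneg_left s1 hμtot0
    have s3 : μtot * ((M * (1 + μtot) + 1) * R) ≤ ((M * (1 + μtot) + 1) * μtot + 1) * R := by
      nlinarith
    calc μtot * ((M * ‖y‖ + lipConst F) * (b - a))
        = (μtot * (M * ‖y‖ + lipConst F)) * (b - a) := by ring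
    _ ≤ (((M * (1 + μtot) + 1) * μtot + 1) * R) * (b - a) :=
        mul_le_mul_of_nonneg_right (s2.trans s3) hba
  intro s hs t ht
  rcases le_total t s with h | h
  · have hm := main t s ht hs h
    rw [show |s - t| = s - t from abs_of_nonneg (by linarith)]
    exact hm
  · have hm := main s t hs ht h
    rw [norm_sub_rev, show |s - t| = t - s by rw [abs_of_nonpos (by linarith)]; ring]
    exact hm

end
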